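/- Let w = (w₁, w₂, w₃) = (λv₁, v₂, w₃) ∈ ℝ³ with w₃ = −2⟨(x,y),(v₁,v₂)⟩·φ·ψ' + v₃(1 − φ'ψ), where ‖(v₂,v₃)‖ < κ|v₁| (0 < κ < 3, v₁ ≠ 0), ‖(x,y,z)‖ < 3, |φ| ≤ δ, |ψ'| ≤ m_ψ, |1 − φ'ψ| ≤ 3, λ > 20, and 6(1+κ)δ·m_ψ < κ. Then ‖(w₂,w₃)‖/|w₁| < κ. -/

import Mathlib

set_option maxHeartbeats 1000000 in
theorem stmt_16 (κ lam δ mψ : ℝ) (hκ0 : 0 < κ) (hκ : κ < 3) (hlam : 20 < lam)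
    (hδmψ : 6 * (1 + κ) * δ * mψ < κ)
    (x y z v₁ v₂ v₃ φv ψ'v c : ℝ) (hv₁ : v₁ ≠ 0)
    (hcone : Real.sqrt (v₂ ^ 2 + v₃ ^ 2) < κ * |v₁|)
    (hq : Real.sqrt (x ^ 2 + y ^ 2 + z ^ 2) < 3)
    (hφ : |φv| ≤ δ) (hψ' : |ψ'v| ≤ mψ) (hc : |c| ≤ 3)
    (w₁ w₂ w₃ : ℝ) (hw₁ : w₁ = lam * v₁) (hw₂ : w₂ = v₂)
    (hw₃ : w₃ = -2 * (x * v₁ + y * v₂) * φv * ψ'v + v₃ * c) :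
    Real.sqrt (w₂ ^ 2 + w₃ ^ 2) / |w₁| < κ := by
  have hA : 0 < |v₁| := abs_pos.mpr hv₁
  have hδ0 : 0 ≤ δ := le_trans (abs_nonneg _) hφ
  have hm0 : 0 ≤ mψ := le_trans (abs_nonneg _) hψ'
  have hv2 : |v₂| < κ * |v₁| := by
    refine lt_of_le_of_lt ?_ hcone
    rw [← Real.sqrt_sq_eq_abs]
    exact Real.sqrt_le_sqrt (by nlinarith [sq_nonneg v₃])
  have hv3 : |v₃| < κ * |v₁| := by
    refine lt_of_le_of_lt ?_ hcone
    rw [← Real.sqrt_sq_eq_abs]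
    exact Real.sqrt_le_sqrt (by nlinarith [sq_nonneg v₂])
  have hxy2 : x ^ 2 + y ^ 2 < 9 := by
    have h1 : Real.sqrt (x ^ 2 + y ^ 2) ≤ Real.sqrt (x ^ 2 + y ^ 2 + z ^ 2) :=
      Real.sqrt_le_sqrt (by nlinarith [sq_nonneg z])
    have h2 : Real.sqrt (x ^ 2 + y ^ 2) < 3 := lt_of_le_of_lt h1 hq
    have h3 : 0 ≤ x ^ 2 + y ^ 2 := by positivity
    nlinarith [Real.sq_sqrt h3, Real.sqrt_nonneg (x ^ 2 + y ^ 2)]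
  have hS : |x * v₁ + y * v₂| ≤ 3 * (1 + κ) * |v₁| := by
    have hx : |x| ≤ 3 := by nlinarith [sq_abs x, abs_nonneg x, sq_nonneg y]
    have hy : |y| ≤ 3 := by nlinarith [sq_abs y, abs_nonneg y, sq_nonneg x]
    calc |x * v₁ + y * v₂| ≤ |x * v₁| + |y * v₂| := abs_add_le _ _
      _ = |x| * |v₁| + |y| * |v₂| := by rw [abs_mul, abs_mul]
      _ ≤ 3 * |v₁| + 3 * (κ * |v₁|) := by
          have h1 : |x| * |v₁| ≤ 3 * |v₁| := by nlinarith [abs_nonneg v₁]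
          have h2 : |y| * |v₂| ≤ 3 * (κ * |v₁|) := by nlinarith [abs_nonneg v₂, abs_nonneg y, hv2.le]
          linarith
      _ ≤ 3 * (1 + κ) * |v₁| := by nlinarith
  have hw3 : |w₃| < 4 * (κ * |v₁|) := by
    rw [hw₃]
    calc |(-2 * (x * v₁ + y * v₂) * φv * ψ'v + v₃ * c)|
        ≤ |(-2 * (x * v₁ + y * v₂) * φv * ψ'v)| + |v₃ * c| := abs_add_le _ _
      _ ≤ 2 * (3 * (1 + κ) * |v₁|) * δ * mψ + (κ * |v₁|) * 3 := by
          have h1 : |(-2 * (x * v₁ + y * v₂) * φv * ψ'v)| = 2 * |x * v₁ + y * v₂| * |φv| * |ψ'v| := by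
            rw [abs_mul, abs_mul, abs_mul]; ring_nf
          rw [h1, abs_mul]
          have := abs_nonneg (x * v₁ + y * v₂)
          gcongr <;> first | exact hφ | exact hψ' | exact hS | exact hv3.le | exact hc
      _ < 4 * (κ * |v₁|) := by nlinarith
  have hsum : |w₂| + |w₃| < 5 * (κ * |v₁|) := by
    rw [hw₂]; linarith
  have hsqrt : Real.sqrt (w₂ ^ 2 + w₃ ^ 2) ≤ |w₂| + |w₃| := by
    rw [show |w₂| + |w₃| = Real.sqrt ((|w₂| + |w₃|) ^ 2) from
      (Real.sqrt_sq (by positivity)).symm]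
    exact Real.sqrt_le_sqrt (by nlinarith [sq_abs w₂, sq_abs w₃, abs_nonneg w₂, abs_nonneg w₃])
  have hw1 : |w₁| = lam * |v₁| := by
    rw [hw₁, abs_mul, abs_of_pos (by linarith : (0:ℝ) < lam)]
  rw [div_lt_iff₀ (by rw [hw1]; positivity), hw1]
  nlinarith [Real.sqrt_nonneg (w₂ ^ 2 + w₃ ^ 2)]
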